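/- If (X,d) is an ultrametric space and a ∈ X, then the flattened function σ(x,y) = d(x,y)/(d(x,a)·d(y,a)) is an ultrametric on X \ {a}: for all x,y,z ∈ X \ {a}, σ(x,y) ≤ max{σ(x,z), σ(z,y)}. -/
import Mathlib

/-- Auxiliary: if `d(x,y) ≤ d(x,z)`, then the multiplicative strong triangle
inequality holds. -/
theorem flattening_aux {X : Type*} [MetricSpace X]
    (hu : ∀ x y z : X, dist x y ≤ max (dist x z) (dist z y))
    (a : X) (x y z : X) (h : dist x y ≤ dist x z) :
    dist x y * dist z a ≤ max (dist x z * dist y a) (dist z y * dist x a) := by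
  rcases le_or_gt (dist z a) (dist y a) with hzy | hzy
  · exact le_max_of_le_left (mul_le_mul h hzy dist_nonneg dist_nonneg)
  · rcases le_or_gt (dist x y) (dist x a) with hxy | hxy
    · -- d(z,a) ≤ max(d(z,y), d(y,a)) and d(y,a) < d(z,a) give d(z,a) ≤ d(z,y)
      have h1 : dist z a ≤ dist z y := by
        have := hu z a y
        rcases le_max_iff.mp this with h' | h'
        · exact h'
        · linarith
      refine le_max_of_le_right ?_
      calc dist x y * dist z a ≤ dist x a * dist z y :=
            mul_le_mul hxy h1 dist_nonneg dist_nonneg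
        _ = dist z y * dist x a := mul_comm _ _
    · -- d(x,y) ≤ max(d(x,a), d(y,a)) so d(x,y) ≤ d(y,a)
      have h2 : dist x y ≤ dist y a := by
        have := hu x y a
        rw [dist_comm a y] at this
        rcases le_max_iff.mp this with h' | h'
        · linarith
        · exact h'
      -- d(x,a) < d(z,a), so d(z,a) ≤ d(x,z)
      have h3 : dist x a < dist z a := by linarith
      have h4 : dist z a ≤ dist x z := by
        have := hu z a x
        rw [dist_comm z x] at this
        rcases le_max_iff.mp this with h' | h'
        · exact h'
        · linarith
      refine le_max_of_le_left ?_
      calc dist x y * dist z a ≤ dist y a * dist x z :=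
            mul_le_mul h2 h4 dist_nonneg dist_nonneg
        _ = dist x z * dist y a := mul_comm _ _

/-- In an ultrametric space with base point `a`, the flattened
function `σ(x,y) = d(x,y)/(d(x,a)·d(y,a))` satisfies the strong triangle
inequality on `X \ {a}`. -/
theorem flattening_ultrametric {X : Type*} [MetricSpace X]
    (hu : ∀ x y z : X, dist x y ≤ max (dist x z) (dist z y))
    (a : X) (x y z : X) (hx : x ≠ a) (hy : y ≠ a) (hz : z ≠ a) :
    dist x y / (dist x a * dist y a) ≤
      max (dist x z / (dist x a * dist z a))
        (dist z y / (dist z a * dist y a)) := by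
  have hxa : 0 < dist x a := dist_pos.mpr hx
  have hya : 0 < dist y a := dist_pos.mpr hy
  have hza : 0 < dist z a := dist_pos.mpr hz
  have key : dist x y * dist z a ≤
      max (dist x z * dist y a) (dist z y * dist x a) := by
    rcases le_max_iff.mp (hu x y z) with h | h
    · exact flattening_aux hu a x y z h
    · have := flattening_aux hu a y x z (by rwa [dist_comm y x, dist_comm y z])
      rw [dist_comm y x] at this
      rw [max_comm]
      rw [dist_comm x z, dist_comm z y]
      exact this
  rcases le_max_iff.mp key with h | h
  · refine le_max_of_le_left ?_
    rw [div_le_div_iff₀ (by positivity) (by positivity)]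
    nlinarith [mul_le_mul_of_nonneg_left h (le_of_lt hxa)]
  · refine le_max_of_le_right ?_
    rw [div_le_div_iff₀ (by positivity) (by positivity)]
    nlinarith [mul_le_mul_of_nonneg_left h (le_of_lt hya)]
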